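/- φ(0) = 15/2; moreover the unique global minimizer η* of φ is strictly positive, hence α* < 15/2, and for α = 15/2 the smaller of the two solutions of the equation φ(η) = α equals 0. -/

import Mathlib

open MeasureTheory Real

noncomputable section

/-- `φ(η) = (∫₀¹ e^{η z²} dz) / (∫₀¹ z² (1 − z²) e^{η z²} dz)`. -/
noncomputable def phi (η : ℝ) : ℝ :=
  (∫ z in (0:ℝ)..1, Real.exp (η * z ^ 2)) /
    (∫ z in (0:ℝ)..1, z ^ 2 * (1 - z ^ 2) * Real.exp (η * z ^ 2))

open intervalIntegral Set

def Ig (g : ℝ → ℝ) (η : ℝ) : ℝ := ∫ z in (0:ℝ)..1, g z * Real.exp (η * z ^ 2)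

lemma Ig_intble (g : ℝ → ℝ) (hg : Continuous g) (η : ℝ) :
    IntervalIntegrable (fun z => g z * Real.exp (η * z ^ 2)) volume 0 1 :=
  (hg.mul (by continuity)).intervalIntegrable _ _

lemma Ig_hasDerivAt (g : ℝ → ℝ) (hg : Continuous g) (η : ℝ) :
    HasDerivAt (Ig g) (Ig (fun z => z ^ 2 * g z) η) η := by
  have key := intervalIntegral.hasDerivAt_integral_of_dominated_loc_of_deriv_le
      (F := fun x z => g z * Real.exp (x * z ^ 2))
      (F' := fun x z => g z * (Real.exp (x * z ^ 2) * z ^ 2))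
      (x₀ := η) (a := 0) (b := 1) (μ := volume)
      (bound := fun z => |g z| * Real.exp (|η| + 1)) (Metric.ball_mem_nhds η one_pos)
      (Filter.Eventually.of_forall fun x =>
        ((hg.mul (by continuity)).aestronglyMeasurable))
      (Ig_intble g hg η)
      ((hg.mul (by continuity)).aestronglyMeasurable)
      ?_ ?_ ?_
  · have h2 : (Ig (fun z => z ^ 2 * g z) η) = ∫ z in (0:ℝ)..1, g z * (Real.exp (η * z ^ 2) * z ^ 2) := by
      unfold Ig; apply intervalIntegral.integral_congr; intro z _; ring
    rw [h2]; exact key.2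
  · refine Filter.Eventually.of_forall fun z hz x hx => ?_
    have hz' : z ∈ Set.Ioc (0:ℝ) 1 := by simpa [Set.uIoc_of_le (zero_le_one)] using hz
    have hz2 : z ^ 2 ≤ 1 := by nlinarith [hz'.1, hz'.2]
    have hz0 : (0:ℝ) ≤ z ^ 2 := sq_nonneg z
    have hx' : |x| < |η| + 1 := by
      have := abs_sub_abs_le_abs_sub x η
      have hd : |x - η| < 1 := by simpa [Metric.mem_ball, Real.dist_eq] using hx
      linarith
    have hxz : x * z ^ 2 ≤ |η| + 1 := by
      calc x * z ^ 2 ≤ |x| * z ^ 2 := by nlinarith [le_abs_self x]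
      _ ≤ |x| * 1 := by nlinarith [abs_nonneg x]
      _ ≤ |η| + 1 := by linarith
    have : ‖g z * (Real.exp (x * z ^ 2) * z ^ 2)‖ = |g z| * (Real.exp (x * z ^ 2) * z ^ 2) := by
      rw [norm_mul, norm_mul]
      simp [abs_of_nonneg (Real.exp_pos _).le, abs_of_nonneg hz0, Real.norm_eq_abs]
    rw [this]
    have h1 : Real.exp (x * z ^ 2) * z ^ 2 ≤ Real.exp (|η| + 1) := by
      calc Real.exp (x * z ^ 2) * z ^ 2 ≤ Real.exp (x * z ^ 2) * 1 := by
            nlinarith [(Real.exp_pos (x * z ^ 2)).le]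
        _ ≤ Real.exp (|η| + 1) := by simpa using Real.exp_le_exp.2 hxz
    exact mul_le_mul_of_nonneg_left h1 (abs_nonneg _)
  · exact ((hg.abs.mul continuous_const).intervalIntegrable _ _)
  · refine Filter.Eventually.of_forall fun z hz x hx => ?_
    have h : HasDerivAt (fun x : ℝ => x * z ^ 2) (z ^ 2) x := hasDerivAt_mul_const _
    exact (h.exp).const_mul (g z)

lemma Ig_linear {g h k : ℝ → ℝ} (hg : Continuous g) (hh : Continuous h) (s : ℝ)
    (hk : ∀ z, k z = g z - s * h z) (η : ℝ) : Ig k η = Ig g η - s * Ig h η := by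
  unfold Ig
  have : ∀ z, k z * Real.exp (η * z ^ 2)
      = g z * Real.exp (η * z ^ 2) - s * (h z * Real.exp (η * z ^ 2)) := by
    intro z; rw [hk z]; ring
  rw [intervalIntegral.integral_congr (g := fun z => g z * Real.exp (η * z ^ 2)
        - s * (h z * Real.exp (η * z ^ 2))) (fun z _ => this z),
    intervalIntegral.integral_sub (Ig_intble g hg η) ((Ig_intble h hh η).const_mul s),
    intervalIntegral.integral_const_mul]

lemma Ig_nonneg {g : ℝ → ℝ} (hnn : ∀ z ∈ Set.Icc (0:ℝ) 1, 0 ≤ g z) (η : ℝ) :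
    0 ≤ Ig g η :=
  intervalIntegral.integral_nonneg zero_le_one
    (fun z hz => mul_nonneg (hnn z hz) (Real.exp_pos _).le)

lemma Ig_pos {g : ℝ → ℝ} (hg : Continuous g) (hnn : ∀ z ∈ Set.Icc (0:ℝ) 1, 0 ≤ g z)
    {u v : ℝ} (h0u : 0 ≤ u) (huv : u < v) (hv1 : v ≤ 1)
    (hpos : ∀ z ∈ Set.Ioo u v, 0 < g z) (η : ℝ) : 0 < Ig g η := by
  have hcont : Continuous fun z => g z * Real.exp (η * z ^ 2) := hg.mul (by continuity)
  have hsplit : Ig g η = (∫ z in (0:ℝ)..u, g z * Real.exp (η * z ^ 2))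
      + ((∫ z in u..v, g z * Real.exp (η * z ^ 2)) + ∫ z in v..(1:ℝ), g z * Real.exp (η * z ^ 2)) := by
    unfold Ig
    rw [intervalIntegral.integral_add_adjacent_intervals (hcont.intervalIntegrable _ _)
      (hcont.intervalIntegrable _ _),
      intervalIntegral.integral_add_adjacent_intervals (hcont.intervalIntegrable _ _)
      (hcont.intervalIntegrable _ _)]
  have h1 : 0 ≤ ∫ z in (0:ℝ)..u, g z * Real.exp (η * z ^ 2) :=
    intervalIntegral.integral_nonneg h0u (fun z hz => mul_nonneg
      (hnn z ⟨hz.1, hz.2.trans (huv.le.trans hv1)⟩) (Real.exp_pos _).le)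
  have h3 : 0 ≤ ∫ z in v..(1:ℝ), g z * Real.exp (η * z ^ 2) :=
    intervalIntegral.integral_nonneg hv1 (fun z hz => mul_nonneg
      (hnn z ⟨h0u.trans (huv.le.trans hz.1), hz.2⟩) (Real.exp_pos _).le)
  have h2 : 0 < ∫ z in u..v, g z * Real.exp (η * z ^ 2) :=
    intervalIntegral.intervalIntegral_pos_of_pos_on (hcont.intervalIntegrable _ _)
      (fun z hz => mul_pos (hpos z hz) (Real.exp_pos _)) huv
  rw [hsplit]; linarith

/-- weights -/
def w0 (a b c : ℝ) (z : ℝ) : ℝ := c * (z ^ 2 - a) * (z ^ 2 - b)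
def w1 (a b c : ℝ) (z : ℝ) : ℝ := c * (z ^ 2 - a) ^ 2 * (z ^ 2 - b)
def w2 (a b c : ℝ) (z : ℝ) : ℝ := c * (z ^ 2 - a) ^ 2 * (z ^ 2 - b) ^ 2

lemma w0_cont (a b c : ℝ) : Continuous (w0 a b c) := by unfold w0; continuity
lemma w1_cont (a b c : ℝ) : Continuous (w1 a b c) := by unfold w1; continuity
lemma w2_cont (a b c : ℝ) : Continuous (w2 a b c) := by unfold w2; continuity

section core
variable {a b c : ℝ}

lemma K_pos (ha : 0 < a) (hab : a < b) (hb : b ≤ 361/400) (hc : 0 < c) (η : ℝ) :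
    0 < Ig (w2 a b c) η := by
  refine Ig_pos (w2_cont a b c) (fun z _ => by unfold w2; positivity)
    (u := 19/20) (v := 1) (by norm_num) (by norm_num) le_rfl (fun z hz => ?_) η
  have h1 : (361/400 : ℝ) < z ^ 2 := by nlinarith [hz.1, hz.2]
  have h2 : (0:ℝ) < z ^ 2 - b := by linarith
  have h3 : (0:ℝ) < z ^ 2 - a := by linarith
  unfold w2; positivity

lemma P_hasDerivAt (η : ℝ) :
    HasDerivAt (fun x => Real.exp (-b * x) * Ig (w1 a b c) x)
      (Real.exp (-b * η) * (Ig (fun z => z ^ 2 * w1 a b c z) η - b * Ig (w1 a b c) η)) η := by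
  have h1 : HasDerivAt (fun x : ℝ => Real.exp (-b * x)) (Real.exp (-b * η) * (-b)) η := by
    have := ((hasDerivAt_id η).const_mul (-b)).exp
    simpa using this
  have h2 := Ig_hasDerivAt (w1 a b c) (w1_cont a b c) η
  have := h1.mul h2
  exact this.congr_deriv (by ring)

lemma P_strictMono (ha : 0 < a) (hab : a < b) (hb : b ≤ 361/400) (hc : 0 < c) :
    StrictMono (fun x => Real.exp (-b * x) * Ig (w1 a b c) x) := by
  apply strictMono_of_deriv_pos
  intro x
  rw [(P_hasDerivAt x).deriv]
  have hlin : Ig (w2 a b c) x = Ig (fun z => z ^ 2 * w1 a b c z) x - b * Ig (w1 a b c) x :=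
    Ig_linear (by have := w1_cont a b c; continuity) (w1_cont a b c) b
      (fun z => by unfold w1 w2; ring) x
  rw [← hlin]
  exact mul_pos (Real.exp_pos _) (K_pos ha hab hb hc x)

lemma Q_hasDerivAt (η : ℝ) :
    HasDerivAt (fun x => Real.exp (-a * x) * Ig (w0 a b c) x)
      (Real.exp (-a * η) * Ig (w1 a b c) η) η := by
  have h1 : HasDerivAt (fun x : ℝ => Real.exp (-a * x)) (Real.exp (-a * η) * (-a)) η := by
    simpa using ((hasDerivAt_id η).const_mul (-a)).exp
  have h2 := Ig_hasDerivAt (w0 a b c) (w0_cont a b c) η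
  have h3 := h1.mul h2
  have hlin : Ig (w1 a b c) η = Ig (fun z => z ^ 2 * w0 a b c z) η - a * Ig (w0 a b c) η :=
    Ig_linear (by have := w0_cont a b c; continuity) (w0_cont a b c) a
      (fun z => by unfold w0 w1; ring) η
  exact h3.congr_deriv (by rw [hlin]; ring)

/-- the main rigidity lemma: if `Ig w1` vanishes at `ηs` then `e^{-aη} Ig w0`
has a strict global minimum at `ηs`. -/
lemma Q_min (ha : 0 < a) (hab : a < b) (hb : b ≤ 361/400) (hc : 0 < c)
    {ηs : ℝ} (hG : Ig (w1 a b c) ηs = 0) :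
    ∀ η ≠ ηs, Real.exp (-a * ηs) * Ig (w0 a b c) ηs < Real.exp (-a * η) * Ig (w0 a b c) η := by
  intro η hne
  set Q := fun x => Real.exp (-a * x) * Ig (w0 a b c) x with hQ
  have hP := P_strictMono ha hab hb hc
  have hPs : Real.exp (-b * ηs) * Ig (w1 a b c) ηs = 0 := by rw [hG]; ring
  have hQd : ∀ x, HasDerivAt Q (Real.exp (-a * x) * Ig (w1 a b c) x) x := Q_hasDerivAt
  have hQc : Continuous Q := by
    have : Differentiable ℝ Q := fun x => (hQd x).differentiableAt
    exact this.continuous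
  rcases lt_or_gt_of_ne hne with h | h
  · -- η < ηs : Q strictly decreasing on Iic ηs
    have hanti : StrictAntiOn Q (Set.Iic ηs) := by
      apply strictAntiOn_of_deriv_neg (convex_Iic _) hQc.continuousOn
      intro x hx
      rw [interior_Iic] at hx
      rw [(hQd x).deriv]
      have : Real.exp (-b * x) * Ig (w1 a b c) x < 0 := by
        rw [← hPs]; exact hP hx
      have hw1 : Ig (w1 a b c) x < 0 := by
        by_contra hcon
        push_neg at hcon
        nlinarith [Real.exp_pos (-b * x)]
      exact mul_neg_of_pos_of_neg (Real.exp_pos _) hw1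
    exact hanti (Set.mem_Iic.2 h.le) (Set.mem_Iic.2 le_rfl) h
  · -- ηs < η : Q strictly increasing on Ici ηs
    have hmono : StrictMonoOn Q (Set.Ici ηs) := by
      apply strictMonoOn_of_deriv_pos (convex_Ici _) hQc.continuousOn
      intro x hx
      rw [interior_Ici] at hx
      rw [(hQd x).deriv]
      have : 0 < Real.exp (-b * x) * Ig (w1 a b c) x := by
        rw [← hPs]; exact hP hx
      have hw1 : 0 < Ig (w1 a b c) x := by
        by_contra hcon
        push_neg at hcon
        nlinarith [Real.exp_pos (-b * x)]
      exact mul_pos (Real.exp_pos _) hw1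
    exact hmono (Set.mem_Ici.2 le_rfl) (Set.mem_Ici.2 h.le) h

lemma Q_anti (ha : 0 < a) (hab : a < b) (hb : b ≤ 361/400) (hc : 0 < c)
    {η₀ : ℝ} (hneg : Ig (w1 a b c) η₀ < 0) :
    ∀ η < η₀, Real.exp (-a * η₀) * Ig (w0 a b c) η₀ < Real.exp (-a * η) * Ig (w0 a b c) η := by
  intro η hη
  set Q := fun x => Real.exp (-a * x) * Ig (w0 a b c) x with hQ
  have hP := P_strictMono ha hab hb hc
  have hQd : ∀ x, HasDerivAt Q (Real.exp (-a * x) * Ig (w1 a b c) x) x := Q_hasDerivAt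
  have hQc : Continuous Q := by
    have : Differentiable ℝ Q := fun x => (hQd x).differentiableAt
    exact this.continuous
  have hanti : StrictAntiOn Q (Set.Iic η₀) := by
    apply strictAntiOn_of_deriv_neg (convex_Iic _) hQc.continuousOn
    intro x hx
    rw [interior_Iic] at hx
    rw [(hQd x).deriv]
    have h1 : Real.exp (-b * x) * Ig (w1 a b c) x < Real.exp (-b * η₀) * Ig (w1 a b c) η₀ :=
      hP hx
    have h2 : Real.exp (-b * η₀) * Ig (w1 a b c) η₀ < 0 :=
      mul_neg_of_pos_of_neg (Real.exp_pos _) hneg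
    have hw1 : Ig (w1 a b c) x < 0 := by
      by_contra hcon
      push_neg at hcon
      nlinarith [Real.exp_pos (-b * x)]
    exact mul_neg_of_pos_of_neg (Real.exp_pos _) hw1
  exact hanti (Set.mem_Iic.2 hη.le) (Set.mem_Iic.2 le_rfl) hη

end core

lemma Ig_poly0 (p q r s : ℝ) :
    Ig (fun z => p + q * z ^ 2 + r * z ^ 4 + s * z ^ 6) 0 = p + q / 3 + r / 5 + s / 7 := by
  unfold Ig
  have h : ∀ z : ℝ, (p + q * z ^ 2 + r * z ^ 4 + s * z ^ 6) * Real.exp (0 * z ^ 2)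
      = p + q * z ^ 2 + r * z ^ 4 + s * z ^ 6 := by
    intro z; simp
  rw [intervalIntegral.integral_congr (fun z _ => h z)]
  have i2 : IntervalIntegrable (fun z : ℝ => q * z ^ 2) volume 0 1 := by
    apply Continuous.intervalIntegrable; continuity
  have i4 : IntervalIntegrable (fun z : ℝ => r * z ^ 4) volume 0 1 := by
    apply Continuous.intervalIntegrable; continuity
  have i6 : IntervalIntegrable (fun z : ℝ => s * z ^ 6) volume 0 1 := by
    apply Continuous.intervalIntegrable; continuity
  have ic : IntervalIntegrable (fun _ : ℝ => p) volume 0 1 :=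
    intervalIntegrable_const
  rw [show (fun z : ℝ => p + q * z ^ 2 + r * z ^ 4 + s * z ^ 6)
      = fun z : ℝ => ((p + q * z ^ 2) + r * z ^ 4) + s * z ^ 6 by funext; ring]
  rw [intervalIntegral.integral_add ((ic.add i2).add i4) i6,
    intervalIntegral.integral_add (ic.add i2) i4,
    intervalIntegral.integral_add ic i2]
  simp only [intervalIntegral.integral_const_mul, integral_pow, intervalIntegral.integral_const]
  norm_num; ring

set_option maxHeartbeats 1000000 in
lemma asym (a b c : ℝ) (ha0 : 0 < a) (ha : a ≤ 1/2) (hab : a < b) (hb : b ≤ 17/20)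
    (hc : 0 < c) {η : ℝ} (hη : 20000 ≤ η) : 0 ≤ Ig (w0 a b c) η := by
  have hη0 : (0:ℝ) ≤ η := by linarith
  have hcont : Continuous fun z => w0 a b c z * Real.exp (η * z ^ 2) :=
    (w0_cont a b c).mul (by continuity)
  have hsplit : Ig (w0 a b c) η = (∫ z in (0:ℝ)..(19/20), w0 a b c z * Real.exp (η * z ^ 2))
      + ∫ z in (19/20:ℝ)..1, w0 a b c z * Real.exp (η * z ^ 2) := by
    unfold Ig
    rw [intervalIntegral.integral_add_adjacent_intervals (hcont.intervalIntegrable _ _)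
      (hcont.intervalIntegrable _ _)]
  have h1 : -(c * Real.exp (17/20 * η)) ≤
      ∫ z in (0:ℝ)..(19/20), w0 a b c z * Real.exp (η * z ^ 2) := by
    have hmono : ∀ z ∈ Set.Icc (0:ℝ) (19/20),
        -(c * Real.exp (17/20 * η)) ≤ w0 a b c z * Real.exp (η * z ^ 2) := by
      intro z hz
      rcases le_or_gt (z ^ 2) (17/20) with hcase | hcase
      · have he : Real.exp (η * z ^ 2) ≤ Real.exp (17/20 * η) := by
          apply Real.exp_le_exp.2; nlinarith
        have hf : (-1 : ℝ) ≤ (z ^ 2 - a) * (z ^ 2 - b) := by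
          nlinarith [sq_nonneg z, hz.2, hz.1]
        have hepos := Real.exp_pos (η * z ^ 2)
        have step1 : -(c * Real.exp (17/20 * η)) ≤ -(c * Real.exp (η * z ^ 2)) := by
          nlinarith
        have step2 : -(c * Real.exp (η * z ^ 2)) ≤ c * (z ^ 2 - a) * (z ^ 2 - b) * Real.exp (η * z ^ 2) := by
          nlinarith [mul_nonneg (mul_nonneg hc.le
            (show (0:ℝ) ≤ (z ^ 2 - a) * (z ^ 2 - b) + 1 by linarith)) hepos.le]
        unfold w0
        linarith
      · have : 0 ≤ w0 a b c z := by
          unfold w0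
          have h1 : (0:ℝ) < z ^ 2 - b := by linarith
          have h2 : (0:ℝ) < z ^ 2 - a := by linarith
          positivity
        have := Real.exp_pos (17/20 * η)
        nlinarith [Real.exp_pos (η * z ^ 2)]
    have hge := intervalIntegral.integral_mono_on (by norm_num : (0:ℝ) ≤ 19/20)
      (intervalIntegrable_const (μ := volume)) (hcont.intervalIntegrable _ _) hmono
    rw [intervalIntegral.integral_const] at hge
    simp only [smul_eq_mul] at hge
    nlinarith [Real.exp_pos ((17:ℝ)/20 * η), hge]
  have h2 : (1/20) * (c * (161/400) * (21/400) * Real.exp (361/400 * η)) ≤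
      ∫ z in (19/20:ℝ)..1, w0 a b c z * Real.exp (η * z ^ 2) := by
    have hmono : ∀ z ∈ Set.Icc (19/20:ℝ) 1,
        c * (161/400) * (21/400) * Real.exp (361/400 * η) ≤ w0 a b c z * Real.exp (η * z ^ 2) := by
      intro z hz
      have hx2 : (361/400:ℝ) ≤ z ^ 2 := by nlinarith [hz.1]
      have hA : (161/400:ℝ) ≤ z ^ 2 - a := by linarith
      have hB : (21/400:ℝ) ≤ z ^ 2 - b := by linarith
      have hE : Real.exp (361/400 * η) ≤ Real.exp (η * z ^ 2) := by
        apply Real.exp_le_exp.2; nlinarith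
      have p1 : (161/400:ℝ) * (21/400) ≤ (z ^ 2 - a) * (z ^ 2 - b) := by nlinarith
      have p2 : (161/400:ℝ) * (21/400) * Real.exp (361/400 * η)
          ≤ (z ^ 2 - a) * (z ^ 2 - b) * Real.exp (η * z ^ 2) :=
        mul_le_mul p1 hE (Real.exp_pos _).le (by nlinarith)
      unfold w0
      nlinarith [mul_le_mul_of_nonneg_left p2 hc.le]
    have hge := intervalIntegral.integral_mono_on (by norm_num : (19/20:ℝ) ≤ 1)
      (intervalIntegrable_const (μ := volume)) (hcont.intervalIntegrable _ _) hmono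
    rw [intervalIntegral.integral_const] at hge
    simp only [smul_eq_mul] at hge
    nlinarith [hge]
  have hbig : (1051:ℝ) ≤ Real.exp (21/400 * η) := by
    have := Real.add_one_le_exp (21/400 * η)
    nlinarith
  have hexp : Real.exp (361/400 * η) = Real.exp (17/20 * η) * Real.exp (21/400 * η) := by
    rw [← Real.exp_add]; ring_nf
  rw [hsplit]
  rw [hexp] at h2
  have hkey : (0:ℝ) ≤ c * Real.exp (17/20 * η) *
      (1/20 * (161/400) * (21/400) * Real.exp (21/400 * η) - 1) :=
    mul_nonneg (mul_nonneg hc.le (Real.exp_pos _).le) (by nlinarith)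
  nlinarith [h1, h2, hkey]


/-! ### Concrete setup -/

def IA : ℝ → ℝ := Ig (fun _ => (1:ℝ))
def IB : ℝ → ℝ := Ig (fun z => z ^ 2 * (1 - z ^ 2))

lemma IB_cont_w : Continuous (fun z : ℝ => z ^ 2 * (1 - z ^ 2)) := by continuity

lemma IA_pos (η : ℝ) : 0 < IA η :=
  Ig_pos continuous_const (fun _ _ => zero_le_one) (u := 0) (v := 1) le_rfl zero_lt_one le_rfl
    (fun _ _ => zero_lt_one) η

lemma IB_pos (η : ℝ) : 0 < IB η := by
  refine Ig_pos IB_cont_w (fun z hz => ?_) (u := 1/2) (v := 3/4) (by norm_num) (by norm_num)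
    (by norm_num) (fun z hz => ?_) η
  · have h1 : (0:ℝ) ≤ z ^ 2 := sq_nonneg z
    have h2 : z ^ 2 ≤ 1 := by nlinarith [hz.1, hz.2]
    nlinarith
  · have h1 : (1/4:ℝ) < z ^ 2 := by nlinarith [hz.1]
    have h2 : z ^ 2 < 9/16 := by nlinarith [hz.1, hz.2]
    nlinarith

lemma gap (η : ℝ) : 4 * IB η < IA η := by
  have hid : ∀ z : ℝ, (1 - 2 * z ^ 2) ^ 2 = 1 - 4 * (z ^ 2 * (1 - z ^ 2)) := by
    intro z; ring
  have hlin := Ig_linear (g := fun _ => (1:ℝ)) (h := fun z => z ^ 2 * (1 - z ^ 2))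
    (k := fun z => (1 - 2 * z ^ 2) ^ 2) continuous_const IB_cont_w 4 hid η
  have hpos : 0 < Ig (fun z => (1 - 2 * z ^ 2) ^ 2) η := by
    refine Ig_pos (by continuity) (fun z _ => sq_nonneg _) (u := 0) (v := 1/2) le_rfl
      (by norm_num) (by norm_num) (fun z hz => ?_) η
    have h2 : z ^ 2 < 1/4 := by nlinarith [hz.1, hz.2]
    nlinarith
  have : IA η = Ig (fun _ => (1:ℝ)) η := rfl
  have : IB η = Ig (fun z => z ^ 2 * (1 - z ^ 2)) η := rfl
  unfold IA IB
  linarith [hlin, hpos]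

lemma IA_zero : IA 0 = 1 := by
  have h : IA 0 = Ig (fun z => 1 + 0 * z ^ 2 + 0 * z ^ 4 + 0 * z ^ 6) 0 := by
    unfold IA Ig; apply intervalIntegral.integral_congr; intro z _; ring_nf
  rw [h, Ig_poly0]; norm_num

lemma IB_zero : IB 0 = 2/15 := by
  have h : IB 0 = Ig (fun z => 0 + 1 * z ^ 2 + (-1) * z ^ 4 + 0 * z ^ 6) 0 := by
    unfold IB Ig; apply intervalIntegral.integral_congr; intro z _; ring_nf
  rw [h, Ig_poly0]; norm_num

lemma phi_eq : phi = fun η => IA η / IB η := by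
  funext η
  unfold phi IA IB Ig
  congr 1
  apply intervalIntegral.integral_congr
  intro z _
  ring

lemma phi_zero : phi 0 = 15/2 := by
  rw [phi_eq]; simp only [IA_zero, IB_zero]; norm_num

/-! ### the case `c₀ = 15/2` -/

def r0 : ℝ := Real.sqrt (7/15)
def a0 : ℝ := (1 - r0) / 2
def b0 : ℝ := (1 + r0) / 2

lemma hr0sq : r0 ^ 2 = 7/15 := Real.sq_sqrt (by norm_num)
lemma hr0nn : 0 ≤ r0 := Real.sqrt_nonneg _
lemma hr0ub : r0 ≤ 171/250 := by nlinarith [hr0sq, hr0nn]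
lemma hr0lb : 17/25 ≤ r0 := by nlinarith [hr0sq, hr0nn]

lemma ha0 : 0 < a0 := by unfold a0; nlinarith [hr0ub]
lemma ha0' : a0 ≤ 1/2 := by unfold a0; nlinarith [hr0nn]
lemma hab0 : a0 < b0 := by unfold a0 b0; nlinarith [hr0lb]
lemma hb0 : b0 ≤ 17/20 := by unfold b0; nlinarith [hr0ub]
lemma hb0' : b0 ≤ 361/400 := le_trans hb0 (by norm_num)

lemma hw0id : ∀ z : ℝ, w0 a0 b0 (15/2) z = 1 - (15/2) * (z ^ 2 * (1 - z ^ 2)) := by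
  intro z
  unfold w0 a0 b0
  linear_combination (-15/8 : ℝ) * hr0sq

lemma hH0 (η : ℝ) : IA η - (15/2) * IB η = Ig (w0 a0 b0 (15/2)) η := by
  unfold IA IB
  exact (Ig_linear continuous_const IB_cont_w (15/2) hw0id η).symm

lemma hG0val : Ig (w1 a0 b0 (15/2)) 0 = -2/21 := by
  have h : Ig (w1 a0 b0 (15/2)) 0 = Ig (fun z =>
      (-(15/2) * a0 ^ 2 * b0) + ((15/2) * (a0 ^ 2 + 2 * a0 * b0)) * z ^ 2
      + (-(15/2) * (2 * a0 + b0)) * z ^ 4 + (15/2) * z ^ 6) 0 := by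
    unfold Ig; apply intervalIntegral.integral_congr; intro z _
    unfold w1; ring
  rw [h, Ig_poly0]
  unfold a0 b0
  linear_combination (5/16 - 15/16 * r0) * hr0sq

lemma hw0zero : Ig (w0 a0 b0 (15/2)) 0 = 0 := by
  rw [← hH0, IA_zero, IB_zero]; norm_num

/-- the derivative of `Ig (w0 …)` at `0` equals `-2/21`. -/
lemma hG0der : HasDerivAt (Ig (w0 a0 b0 (15/2))) (-2/21) 0 := by
  have h := Ig_hasDerivAt (w0 a0 b0 (15/2)) (w0_cont _ _ _) 0
  have hlin : Ig (w1 a0 b0 (15/2)) 0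
      = Ig (fun z => z ^ 2 * w0 a0 b0 (15/2) z) 0 - a0 * Ig (w0 a0 b0 (15/2)) 0 :=
    Ig_linear (by have := w0_cont a0 b0 (15/2); continuity) (w0_cont _ _ _) a0
      (fun z => by unfold w0 w1; ring) 0
  have : Ig (fun z => z ^ 2 * w0 a0 b0 (15/2) z) 0 = -2/21 := by
    rw [hG0val, hw0zero] at hlin; linarith
  rwa [this] at h

/-- there is `δ ∈ (0,1)` with `Ig (w0 …) δ < 0`. -/
lemma exists_delta : ∃ δ : ℝ, 0 < δ ∧ δ < 1 ∧ Ig (w0 a0 b0 (15/2)) δ < 0 := by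
  have h := hasDerivAt_iff_tendsto_slope.mp hG0der
  have hlt : ∀ᶠ x in nhdsWithin 0 {(0:ℝ)}ᶜ, slope (Ig (w0 a0 b0 (15/2))) 0 x < 0 :=
    h.eventually_lt_const (by norm_num)
  have hmono : nhdsWithin (0:ℝ) (Set.Ioi 0) ≤ nhdsWithin 0 {(0:ℝ)}ᶜ :=
    nhdsWithin_mono _ (fun x hx => ne_of_gt hx)
  have hlt' : ∀ᶠ x in nhdsWithin (0:ℝ) (Set.Ioi 0), slope (Ig (w0 a0 b0 (15/2))) 0 x < 0 :=
    hlt.filter_mono hmono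
  have hIoo : ∀ᶠ x in nhdsWithin (0:ℝ) (Set.Ioi 0), x ∈ Set.Ioo (0:ℝ) 1 :=
    Ioo_mem_nhdsGT_of_mem ⟨le_rfl, zero_lt_one⟩
  obtain ⟨δ, hs, hd⟩ := (hlt'.and hIoo).exists
  refine ⟨δ, hd.1, hd.2, ?_⟩
  have hslope : slope (Ig (w0 a0 b0 (15/2))) 0 δ
      = Ig (w0 a0 b0 (15/2)) δ / δ := by
    rw [slope_def_field, hw0zero]; simp
  rw [hslope] at hs
  by_contra hcon
  push_neg at hcon
  have := div_nonneg hcon hd.1.le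
  linarith

/-- for `η < 0` we have `Ig (w0 …) η > 0`, i.e. `phi η > 15/2`. -/
lemma neg_side {η : ℝ} (hη : η < 0) : 0 < Ig (w0 a0 b0 (15/2)) η := by
  have hneg : Ig (w1 a0 b0 (15/2)) 0 < 0 := by rw [hG0val]; norm_num
  have h := Q_anti ha0 hab0 hb0' (by norm_num) hneg η hη
  rw [hw0zero, mul_zero] at h
  nlinarith [Real.exp_pos (-a0 * η), h]

/-! ### rigidity at the minimizer -/

lemma min_rigidity (a b c : ℝ) (ha : 0 < a) (hab : a < b) (hb : b ≤ 361/400)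
    (hc : 0 < c) (hsum : a + b = 1) (hprod : c * (a * b) = 1) {ηs : ℝ}
    (hA : IA ηs = c * IB ηs)
    (hA' : Ig (fun z => z ^ 2 * 1) ηs = c * Ig (fun z => z ^ 2 * (z ^ 2 * (1 - z ^ 2))) ηs) :
    ∀ η, η ≠ ηs → c * IB η < IA η := by
  have hw0 : ∀ z : ℝ, w0 a b c z = 1 - c * (z ^ 2 * (1 - z ^ 2)) := by
    intro z; unfold w0
    linear_combination (-(c * z ^ 2)) * hsum + hprod
  have hH : ∀ η, IA η - c * IB η = Ig (w0 a b c) η := fun η =>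
    (Ig_linear continuous_const IB_cont_w c hw0 η).symm
  have h0 : Ig (w0 a b c) ηs = 0 := by rw [← hH]; linarith [hA]
  have hw1z : ∀ η, Ig (w1 a b c) η
      = Ig (fun z => z ^ 2 * w0 a b c z) η - a * Ig (w0 a b c) η := fun η =>
    Ig_linear (by have := w0_cont a b c; continuity) (w0_cont a b c) a
      (fun z => by unfold w1 w0; ring) η
  have hzw0 : ∀ η, Ig (fun z => z ^ 2 * w0 a b c z) η
      = Ig (fun z => z ^ 2 * 1) η - c * Ig (fun z => z ^ 2 * (z ^ 2 * (1 - z ^ 2))) η :=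
    fun η => Ig_linear (by continuity) (by continuity) c
      (fun z => by rw [hw0 z]; ring) η
  have hG : Ig (w1 a b c) ηs = 0 := by
    rw [hw1z, hzw0, h0, hA']; ring
  have hQ := Q_min ha hab hb hc hG
  intro η hne
  have hq := hQ η hne
  rw [h0, mul_zero] at hq
  have hpos : 0 < Ig (w0 a b c) η := by
    nlinarith [Real.exp_pos (-a * η), hq]
  have := hH η
  linarith

/-- `φ(0) = 15/2`; the unique global minimizer `ηs` of `φ` is strictly positive, hence the
minimum value `φ ηs` is `< 15/2`, and the smaller of the two solutions of `φ η = 15/2`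
equals `0` (i.e. `0` is a solution and every solution is `≥ 0`). -/
theorem stmt1 :
    phi 0 = 15 / 2 ∧
    ∃ ηs : ℝ,
      (∀ η : ℝ, η ≠ ηs → phi ηs < phi η) ∧
      0 < ηs ∧
      phi ηs < 15 / 2 ∧
      (∀ η : ℝ, phi η = 15 / 2 → 0 ≤ η) := by

  have hphi : ∀ η, phi η = IA η / IB η := fun η => by rw [phi_eq]
  -- basic translations
  have hlt : ∀ x : ℝ, Ig (w0 a0 b0 (15/2)) x < 0 → phi x < 15/2 := by
    intro x hx
    rw [hphi, div_lt_iff₀ (IB_pos x)]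
    have := hH0 x; linarith
  have hge : ∀ x : ℝ, 0 ≤ Ig (w0 a0 b0 (15/2)) x → 15/2 ≤ phi x := by
    intro x hx
    rw [hphi, le_div_iff₀ (IB_pos x)]
    have := hH0 x; linarith
  have hgt : ∀ x : ℝ, 0 < Ig (w0 a0 b0 (15/2)) x → 15/2 < phi x := by
    intro x hx
    rw [hphi, lt_div_iff₀ (IB_pos x)]
    have := hH0 x; linarith
  -- continuity of phi
  have hIAd : Differentiable ℝ IA := fun x =>
    (Ig_hasDerivAt (fun _ => (1:ℝ)) continuous_const x).differentiableAt
  have hIBd : Differentiable ℝ IB := fun x =>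
    (Ig_hasDerivAt (fun z => z ^ 2 * (1 - z ^ 2)) IB_cont_w x).differentiableAt
  have hphiC : Continuous phi := by
    rw [phi_eq]
    exact hIAd.continuous.div hIBd.continuous (fun x => (IB_pos x).ne')
  -- a point where phi < 15/2
  obtain ⟨δ, hδ0, hδ1, hδneg⟩ := exists_delta
  have hφδ : phi δ < 15/2 := hlt δ hδneg
  -- minimum over the compact interval
  obtain ⟨ηs, hmem, hmin⟩ := (isCompact_Icc : IsCompact (Set.Icc (0:ℝ) 20000)).exists_isMinOn
    ⟨0, le_rfl, by norm_num⟩ hphiC.continuousOn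
  have hδmem : δ ∈ Set.Icc (0:ℝ) 20000 := ⟨hδ0.le, by linarith⟩
  have hφs : phi ηs < 15/2 := lt_of_le_of_lt (hmin hδmem) hφδ
  -- phi > 15/2 for negative η
  have hneg : ∀ η : ℝ, η < 0 → 15/2 < phi η := fun η hη => hgt η (neg_side hη)
  -- global minimality (non-strict)
  have hglobal : ∀ η : ℝ, phi ηs ≤ phi η := by
    intro η
    rcases lt_trichotomy η 0 with h | h | h
    · linarith [hneg η h]
    · subst h; exact hmin ⟨le_rfl, by norm_num⟩
    · rcases le_or_gt η 20000 with h' | h'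
      · exact hmin ⟨h.le, h'⟩
      · have := hge η (asym a0 b0 (15/2) ha0 ha0' hab0 hb0 (by norm_num) h'.le)
        linarith
  -- positivity of ηs
  have hηs0 : 0 < ηs := by
    rcases hmem.1.eq_or_lt with h | h
    · exfalso; rw [← h] at hφs; rw [phi_zero] at hφs; exact absurd hφs (lt_irrefl _)
    · exact h
  -- critical point
  have hA' := Ig_hasDerivAt (fun _ => (1:ℝ)) continuous_const ηs
  have hB' := Ig_hasDerivAt (fun z => z ^ 2 * (1 - z ^ 2)) IB_cont_w ηs
  have hd : HasDerivAt (fun η => IA η / IB η)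
      ((Ig (fun z => z ^ 2 * 1) ηs * IB ηs - IA ηs * Ig (fun z => z ^ 2 * (z ^ 2 * (1 - z ^ 2))) ηs)
        / (IB ηs) ^ 2) ηs := hA'.div hB' (IB_pos ηs).ne'
  have hloc : IsLocalMin (fun η => IA η / IB η) ηs := by
    apply Filter.Eventually.of_forall
    intro x
    have := hglobal x
    rwa [hphi x, hphi ηs] at this
  have hzero := hloc.hasDerivAt_eq_zero hd
  have hprod : Ig (fun z => z ^ 2 * 1) ηs * IB ηs
      - IA ηs * Ig (fun z => z ^ 2 * (z ^ 2 * (1 - z ^ 2))) ηs = 0 :=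
    (div_eq_zero_iff.mp hzero).resolve_right (pow_ne_zero 2 (IB_pos ηs).ne')
  -- the minimum value c
  set c := IA ηs / IB ηs with hcdef
  have hφsc : phi ηs = c := hphi ηs
  have hc4 : 4 < c := by
    rw [hcdef, lt_div_iff₀ (IB_pos ηs)]
    linarith [gap ηs]
  have hc0 : (0:ℝ) < c := by linarith
  have hc15 : c < 15/2 := by rw [← hφsc]; exact hφs
  have hAc : IA ηs = c * IB ηs := by
    rw [hcdef, div_mul_cancel₀ _ (IB_pos ηs).ne']
  have hA'c : Ig (fun z => z ^ 2 * 1) ηs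
      = c * Ig (fun z => z ^ 2 * (z ^ 2 * (1 - z ^ 2))) ηs := by
    have hfac : (Ig (fun z => z ^ 2 * 1) ηs
        - c * Ig (fun z => z ^ 2 * (z ^ 2 * (1 - z ^ 2))) ηs) * IB ηs = 0 := by
      linear_combination hprod + Ig (fun z => z ^ 2 * (z ^ 2 * (1 - z ^ 2))) ηs * hAc
    have := (mul_eq_zero.mp hfac).resolve_right (IB_pos ηs).ne'
    linarith
  -- the roots a, b for this c
  set r := Real.sqrt (1 - 4/c) with hrdef
  have h4c : (0:ℝ) < 1 - 4/c := by
    have : 4/c < 1 := (div_lt_one hc0).2 (by linarith)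
    linarith
  have hr2 : r ^ 2 = 1 - 4/c := Real.sq_sqrt h4c.le
  have hrpos : 0 < r := Real.sqrt_pos.2 h4c
  have hrub : r ≤ 171/250 := by
    have h4c' : (8:ℝ)/15 ≤ 4/c := by
      rw [div_le_div_iff₀ (by norm_num) hc0]; linarith
    nlinarith [hr2, hrpos.le]
  have key := min_rigidity ((1 - r)/2) ((1 + r)/2) c
    (by nlinarith) (by nlinarith) (by nlinarith) hc0 (by ring)
    (by
      have h1 : (1 - r) * (1 + r) = 4 / c := by linear_combination -hr2
      have h2 : c * ((1 - r) / 2 * ((1 + r) / 2)) = c * (4 / c) / 4 := by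
        rw [show (1 - r)/2 * ((1 + r)/2) = (1 - r) * (1 + r) / 4 by ring, h1]; ring
      rw [h2]; field_simp) hAc hA'c
  refine ⟨phi_zero, ηs, ?_, hηs0, hφs, ?_⟩
  · intro η hne
    have := key η hne
    rw [hφsc, hphi η, lt_div_iff₀ (IB_pos η)]
    linarith
  · intro η hval
    by_contra hcon
    push_neg at hcon
    have := hneg η hcon
    rw [hval] at this
    exact absurd this (lt_irrefl _)
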